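/- Let X and Y be nonnegative strongly asymptotically independent random variables (P[X > x, Y > y] ~ C F̄(x)Ḡ(y) as x,y→∞, C > 0) whose distributions F and G are both generalized long-tailed. Then the distribution of min(X,Y) is generalized long-tailed. -/

import Mathlib

open Filter MeasureTheory

/-- Tail of (the distribution of) a random variable `X`. -/
noncomputable def rtail {Ω : Type*} [MeasurableSpace Ω] (μ : Measure Ω) (X : Ω → ℝ) (x : ℝ) : ℝ :=
  (μ {ω | x < X ω}).toReal

/-- The positively decreasing class `𝒫𝒟`. -/
def PosDec (T : ℝ → ℝ) : Prop :=
  ∀ v : ℝ, 1 < v → limsup (fun x => T (v * x) / T x) atTop < 1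

/-- The generalized long-tailed class `𝒪ℒ`. -/
def GenLong (T : ℝ → ℝ) : Prop :=
  ∀ t : ℝ, t ≠ 0 → IsBoundedUnder (· ≤ ·) atTop (fun x => T (x - t) / T x)

/-- The long-tailed class `ℒ`. -/
def LongTailed (T : ℝ → ℝ) : Prop :=
  ∀ t : ℝ, Tendsto (fun x => T (x - t) / T x) atTop (nhds 1)

/-- The dominatedly varying class `𝒟`. -/
def DomVar (T : ℝ → ℝ) : Prop :=
  ∀ b : ℝ, 0 < b → b < 1 → IsBoundedUnder (· ≤ ·) atTop (fun x => T (b * x) / T x)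

/-- Strong asymptotic independence with constant `C`:
`P[X > x, Y > y] ~ C ⋅ F̄(x) ⋅ Ḡ(y)` as `(x, y) → (∞, ∞)`. -/
def SAI {Ω : Type*} [MeasurableSpace Ω] (μ : Measure Ω) (X Y : Ω → ℝ) (C : ℝ) : Prop :=
  Tendsto
    (fun p : ℝ × ℝ =>
      (μ {ω | p.1 < X ω ∧ p.2 < Y ω}).toReal / (rtail μ X p.1 * rtail μ Y p.2))
    (atTop ×ˢ atTop) (nhds C)

theorem stmt4 {Ω : Type*} [MeasurableSpace Ω] (μ : Measure Ω) [IsProbabilityMeasure μ]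
    (X Y : Ω → ℝ) (hX : ∀ ω, 0 ≤ X ω) (hY : ∀ ω, 0 ≤ Y ω)
    (C : ℝ) (hC : 0 < C) (hSAI : SAI μ X Y C)
    (hF : GenLong (rtail μ X)) (hG : GenLong (rtail μ Y)) :
    GenLong (rtail μ (fun ω => min (X ω) (Y ω))) := by
  intro t ht
  -- notation
  set F := rtail μ X with hFdef
  set G := rtail μ Y with hGdef
  set N : ℝ → ℝ := fun x => (μ {ω | x < X ω ∧ x < Y ω}).toReal with hNdef
  have hset : ∀ x : ℝ, {ω | x < min (X ω) (Y ω)} = {ω | x < X ω ∧ x < Y ω} := by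
    intro x; ext ω; simp [lt_min_iff]
  have hmin : ∀ x, rtail μ (fun ω => min (X ω) (Y ω)) x = N x := by
    intro x; rw [rtail, hset]
  -- tail ratio bounds for F and G
  obtain ⟨K₁, hK₁⟩ := hF t ht
  obtain ⟨K₂, hK₂⟩ := hG t ht
  rw [eventually_map] at hK₁ hK₂
  set K₁' := max K₁ 1 with hK₁'def
  set K₂' := max K₂ 1 with hK₂'def
  have hK₁'pos : (1:ℝ) ≤ K₁' := le_max_right _ _
  have hK₂'pos : (1:ℝ) ≤ K₂' := le_max_right _ _
  -- diagonal convergence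
  have hdiag : Tendsto (fun x : ℝ => (x, x)) atTop (atTop ×ˢ atTop) :=
    Tendsto.prodMk tendsto_id tendsto_id
  have hsub : Tendsto (fun x : ℝ => x - t) atTop atTop := by
    simpa [sub_eq_add_neg] using tendsto_atTop_add_const_right atTop (-t) tendsto_id
  have hdiag' : Tendsto (fun x : ℝ => (x - t, x - t)) atTop (atTop ×ˢ atTop) :=
    Tendsto.prodMk hsub hsub
  unfold SAI at hSAI
  have hR : Tendsto (fun x : ℝ => N x / (F x * G x)) atTop (nhds C) := by
    have h := hSAI.comp hdiag
    exact h
  have hRt : Tendsto (fun x : ℝ => N (x - t) / (F (x - t) * G (x - t))) atTop (nhds C) := by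
    have h := hSAI.comp hdiag'
    exact h
  have hlo : ∀ᶠ x : ℝ in atTop, C / 2 < N x / (F x * G x) :=
    hR.eventually (eventually_gt_nhds (by linarith))
  have hhi : ∀ᶠ x : ℝ in atTop, N (x - t) / (F (x - t) * G (x - t)) < 2 * C :=
    hRt.eventually (eventually_lt_nhds (by linarith))
  -- basic inequalities
  have hNF : ∀ x, N x ≤ F x := by
    intro x
    refine ENNReal.toReal_mono (measure_ne_top μ _) (measure_mono ?_)
    intro ω hω; exact hω.1
  have hNG : ∀ x, N x ≤ G x := by
    intro x
    refine ENNReal.toReal_mono (measure_ne_top μ _) (measure_mono ?_)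
    intro ω hω; exact hω.2
  have hN0 : ∀ x, 0 ≤ N x := fun x => ENNReal.toReal_nonneg
  have hF0 : ∀ x, 0 ≤ F x := fun x => ENNReal.toReal_nonneg
  have hG0 : ∀ x, 0 ≤ G x := fun x => ENNReal.toReal_nonneg
  refine ⟨4 * K₁' * K₂', ?_⟩
  rw [eventually_map]
  filter_upwards [hK₁, hK₂, hlo, hhi] with x h1 h2 h3 h4
  simp only [hmin]
  have hBpos : (0:ℝ) < 4 * K₁' * K₂' := by positivity
  rcases eq_or_lt_of_le (hN0 x) with hNx | hNx
  · rw [← hNx, div_zero]; exact le_of_lt hBpos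
  -- N x > 0, hence F x, G x > 0
  have hFx : 0 < F x := lt_of_lt_of_le hNx (hNF x)
  have hGx : 0 < G x := lt_of_lt_of_le hNx (hNG x)
  -- N x ≥ (C/2) * (F x * G x)
  have hNlow : C / 2 * (F x * G x) ≤ N x := by
    have := (lt_div_iff₀ (by positivity : (0:ℝ) < F x * G x)).mp h3
    linarith
  -- shifted tails bounded
  have hFs : F (x - t) ≤ K₁' * F x := by
    have h1' : F (x - t) / F x ≤ K₁' := le_trans h1 (le_max_left _ _)
    calc F (x - t) = F (x - t) / F x * F x := by field_simp
    _ ≤ K₁' * F x := mul_le_mul_of_nonneg_right h1' hFx.le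
  have hGs : G (x - t) ≤ K₂' * G x := by
    have h2' : G (x - t) / G x ≤ K₂' := le_trans h2 (le_max_left _ _)
    calc G (x - t) = G (x - t) / G x * G x := by field_simp
    _ ≤ K₂' * G x := mul_le_mul_of_nonneg_right h2' hGx.le
  -- bound numerator
  have hNum : N (x - t) ≤ 2 * C * (K₁' * F x * (K₂' * G x)) := by
    rcases eq_or_ne (F (x - t) * G (x - t)) 0 with hz | hz
    · have : N (x - t) = 0 := by
        rcases mul_eq_zero.mp hz with h | h
        · exact le_antisymm (by rw [← h]; exact hNF _) (hN0 _)
        · exact le_antisymm (by rw [← h]; exact hNG _) (hN0 _)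
      rw [this]; positivity
    · have heq : N (x - t) = N (x - t) / (F (x - t) * G (x - t)) * (F (x - t) * G (x - t)) := by
        exact (div_mul_cancel₀ _ hz).symm
      rw [heq]
      have hstep : N (x - t) / (F (x - t) * G (x - t)) * (F (x - t) * G (x - t))
          ≤ 2 * C * (F (x - t) * G (x - t)) := by
        apply mul_le_mul_of_nonneg_right h4.le
        have := mul_nonneg (hF0 (x - t)) (hG0 (x - t))
        exact this
      refine le_trans hstep ?_
      apply mul_le_mul_of_nonneg_left ?_ (by positivity : (0:ℝ) ≤ 2 * C)
      exact mul_le_mul hFs hGs (hG0 _) (by positivity)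
  -- conclude
  rw [div_le_iff₀ hNx]
  calc N (x - t) ≤ 2 * C * (K₁' * F x * (K₂' * G x)) := hNum
  _ = 4 * K₁' * K₂' * (C / 2 * (F x * G x)) := by ring
  _ ≤ 4 * K₁' * K₂' * N x := mul_le_mul_of_nonneg_left hNlow hBpos.le
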